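/- Let A ∈ ℂ^{m×p} (m ≥ p) be full rank with polar decomposition A = UH (U with orthonormal columns, H Hermitian positive-definite), and let Ũ ∈ ℂ^{m×p} have orthonormal columns with ‖A − Ũ‖_F < 1. Then the Hermitian part sym(Ũ*A) = (Ũ*A + (Ũ*A)*)/2 is positive definite. -/

import Mathlib

open Matrix
open scoped ComplexOrder

/-- Frobenius norm of a complex matrix. -/
noncomputable def frob {m p : ℕ} (A : Matrix (Fin m) (Fin p) ℂ) : ℝ :=
  Real.sqrt (∑ i, ∑ j, ‖A i j‖ ^ 2)

lemma EuclideanSpace.inner_piLp_equiv_symm {𝕜 ι : Type*} [RCLike 𝕜] [Fintype ι] (x y : ι → 𝕜) :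
    inner 𝕜 ((WithLp.equiv 2 _).symm x : EuclideanSpace 𝕜 ι) ((WithLp.equiv 2 _).symm y) =
      dotProduct (star x) y := by
  rw [dotProduct_comm]; rfl

/-- The Euclidean norm of `E *ᵥ x` is at most the Frobenius norm of `E` times the norm of `x`. -/
lemma mulVec_norm_le {m p : ℕ} (E : Matrix (Fin m) (Fin p) ℂ) (x : Fin p → ℂ) :
    ‖((WithLp.equiv 2 _).symm (E *ᵥ x) : EuclideanSpace ℂ (Fin m))‖ ≤
      frob E * ‖((WithLp.equiv 2 _).symm x : EuclideanSpace ℂ (Fin p))‖ := by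
  set nx : ℝ := ‖((WithLp.equiv 2 _).symm x : EuclideanSpace ℂ (Fin p))‖ with hnx
  have hrow : ∀ i, ‖(E *ᵥ x) i‖ ≤ Real.sqrt (∑ j, ‖E i j‖ ^ 2) * nx := by
    intro i
    have h := norm_inner_le_norm (𝕜 := ℂ)
      ((WithLp.equiv 2 _).symm (star (E i)) : EuclideanSpace ℂ (Fin p))
      ((WithLp.equiv 2 _).symm x : EuclideanSpace ℂ (Fin p))
    rw [EuclideanSpace.inner_piLp_equiv_symm, star_star] at h
    have h1 : ‖((WithLp.equiv 2 _).symm (star (E i)) : EuclideanSpace ℂ (Fin p))‖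
        = Real.sqrt (∑ j, ‖E i j‖ ^ 2) := by
      rw [EuclideanSpace.norm_eq]
      simp [Pi.star_apply]
    rw [h1] at h
    simpa [Matrix.mulVec, dotProduct, hnx] using h
  rw [EuclideanSpace.norm_eq]
  have hfx : frob E * nx = Real.sqrt ((∑ i, ∑ j, ‖E i j‖ ^ 2) * nx ^ 2) := by
    rw [Real.sqrt_mul (by positivity), Real.sqrt_sq (norm_nonneg _)]
    rfl
  rw [hfx]
  apply Real.sqrt_le_sqrt
  rw [Finset.sum_mul]
  apply Finset.sum_le_sum
  intro i _
  calc ‖((WithLp.equiv 2 _).symm (E *ᵥ x) : EuclideanSpace ℂ (Fin m)) i‖ ^ 2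
      = ‖(E *ᵥ x) i‖ ^ 2 := rfl
    _ ≤ (Real.sqrt (∑ j, ‖E i j‖ ^ 2) * nx) ^ 2 := by
        apply sq_le_sq' _ (hrow i)
        nlinarith [hrow i, norm_nonneg ((E *ᵥ x) i)]
    _ = (∑ j, ‖E i j‖ ^ 2) * nx ^ 2 := by
        rw [mul_pow, Real.sq_sqrt (by positivity)]

set_option maxHeartbeats 1000000 in
theorem sym_part_posDef {m p : ℕ} (hmp : p ≤ m)
    (A U U' : Matrix (Fin m) (Fin p) ℂ) (H : Matrix (Fin p) (Fin p) ℂ)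
    (hA : A.rank = p)
    (hAUH : A = U * H) (hU : Uᴴ * U = 1) (hH : H.PosDef)
    (hU' : U'ᴴ * U' = 1) (hclose : frob (A - U') < 1) :
    ((1 / 2 : ℂ) • (U'ᴴ * A + (U'ᴴ * A)ᴴ)).PosDef := by
  refine Matrix.posDef_iff_dotProduct_mulVec.mpr ⟨?_, ?_⟩
  · unfold Matrix.IsHermitian
    rw [conjTranspose_smul]
    simp [add_comm]
  · intro x hx
    set B := U'ᴴ * A with hB
    set q : ℂ := dotProduct (star x) (B *ᵥ x) with hq
    have hstarq : dotProduct (star x) (Bᴴ *ᵥ x) = star q := by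
      rw [hq, ← Matrix.star_dotProduct_star, star_star, Matrix.star_mulVec,
        Matrix.dotProduct_mulVec, dotProduct_comm]
    have hval : dotProduct (star x) (((1 / 2 : ℂ) • (B + Bᴴ)) *ᵥ x)
        = (1 / 2 : ℂ) * (q + star q) := by
      rw [Matrix.smul_mulVec, dotProduct_smul, Matrix.add_mulVec, dotProduct_add, hstarq]
      rfl
    set v : EuclideanSpace ℂ (Fin m) := (WithLp.equiv 2 _).symm (U' *ᵥ x) with hv
    set w : EuclideanSpace ℂ (Fin m) := (WithLp.equiv 2 _).symm ((A - U') *ᵥ x) with hw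
    set ex : EuclideanSpace ℂ (Fin p) := (WithLp.equiv 2 _).symm x with hex
    have hxU : ∀ y : Fin m → ℂ, dotProduct (star x) (U'ᴴ *ᵥ y)
        = dotProduct (star (U' *ᵥ x)) y := by
      intro y
      rw [Matrix.star_mulVec, Matrix.dotProduct_mulVec]
    have hqeq : q = inner ℂ v ((WithLp.equiv 2 _).symm (A *ᵥ x) : EuclideanSpace ℂ (Fin m)) := by
      rw [hq, hB, ← Matrix.mulVec_mulVec, hxU, hv, EuclideanSpace.inner_piLp_equiv_symm]
    have hAx : ((WithLp.equiv 2 _).symm (A *ᵥ x) : EuclideanSpace ℂ (Fin m)) = v + w := by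
      rw [hv, hw]
      have h : A *ᵥ x = U' *ᵥ x + (A - U') *ᵥ x := by
        rw [← Matrix.add_mulVec, add_sub_cancel]
      rw [h]
      rfl
    have hvx : ‖v‖ = ‖ex‖ := by
      have h1 : (inner ℂ v v : ℂ) = inner ℂ ex ex := by
        rw [hv, hex, EuclideanSpace.inner_piLp_equiv_symm, EuclideanSpace.inner_piLp_equiv_symm,
          ← hxU, Matrix.mulVec_mulVec, hU', Matrix.one_mulVec]
      rw [inner_self_eq_norm_sq_to_K (𝕜 := ℂ), inner_self_eq_norm_sq_to_K (𝕜 := ℂ)] at h1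
      have h2 : ‖v‖ ^ 2 = ‖ex‖ ^ 2 := by exact_mod_cast h1
      nlinarith [norm_nonneg v, norm_nonneg ex]
    have hxpos : 0 < ‖ex‖ := by
      rw [norm_pos_iff]
      intro h
      exact hx (congrArg (WithLp.equiv 2 _) h)
    have hwle : ‖w‖ ≤ frob (A - U') * ‖ex‖ := mulVec_norm_le (A - U') x
    have hfrob0 : 0 ≤ frob (A - U') := Real.sqrt_nonneg _
    have hvv : (inner ℂ v v : ℂ) = ((‖ex‖ ^ 2 : ℝ) : ℂ) := by
      rw [inner_self_eq_norm_sq_to_K (𝕜 := ℂ), hvx]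
      norm_cast
    have hqre : q.re = ‖ex‖ ^ 2 + (inner ℂ v w : ℂ).re := by
      rw [hqeq, hAx, inner_add_right, hvv, Complex.add_re, Complex.ofReal_re]
    have hinner_re : -(‖ex‖ * (frob (A - U') * ‖ex‖)) ≤ (inner ℂ v w : ℂ).re := by
      have h1 : |(inner ℂ v w : ℂ).re| ≤ ‖(inner ℂ v w : ℂ)‖ := Complex.abs_re_le_norm _
      have h2 : ‖(inner ℂ v w : ℂ)‖ ≤ ‖v‖ * ‖w‖ := norm_inner_le_norm _ _
      have h3 : ‖v‖ * ‖w‖ ≤ ‖ex‖ * (frob (A - U') * ‖ex‖) := by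
        rw [hvx]
        exact mul_le_mul_of_nonneg_left hwle (norm_nonneg _)
      have h4 := abs_le.mp (h1.trans (h2.trans h3))
      linarith [h4.1]
    have hrepos : 0 < q.re := by
      rw [hqre]
      have hkey : 0 < (1 - frob (A - U')) * (‖ex‖ * ‖ex‖) :=
        mul_pos (by linarith) (mul_pos hxpos hxpos)
      nlinarith [hinner_re, hkey]
    rw [hval]
    have hform : (1 / 2 : ℂ) * (q + star q) = ((q.re : ℝ) : ℂ) := by
      rw [Complex.star_def, Complex.add_conj]
      push_cast
      ring
    rw [hform]
    exact Complex.zero_lt_real.mpr hrepos
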